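/- arXiv:2005.01437 — 5 statements merged into one kernel-verified Lean document; each statement's English description precedes it below -/
import Mathlib

section
/- Let g : ℝ^m → ℝ ∪ {∞} be a proper convex lower semicontinuous function, let b ∈ ℝ^m, and let L : ℝ^n → ℝ^m be a linear map satisfying L Lᵀ = α·Id for some constant α > 0. Define f : ℝ^n → ℝ ∪ {∞} by f(x) = g(Lx + b). Then for every x ∈ ℝ^n, prox_f(x) = x + α⁻¹ Lᵀ (prox_{αg}(Lx + b) − Lx − b). -/
noncomputable section

open scoped RealInnerProductSpace

/-- `p` is a proximal point of the extended-real-valued function `h` at `x`,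
i.e. `p` minimizes `u ↦ h u + (1/2)‖u − x‖²`. -/
def IsProxPt {E : Type*} [NormedAddCommGroup E] [InnerProductSpace ℝ E]
    (h : E → EReal) (x p : E) : Prop :=
  ∀ u : E,
    h p + (((1 : ℝ) / 2 * ‖p - x‖ ^ 2 : ℝ) : EReal) ≤
      h u + (((1 : ℝ) / 2 * ‖u - x‖ ^ 2 : ℝ) : EReal)

/-- `g` is proper, convex and lower semicontinuous (values in `ℝ ∪ {∞}`). -/
def ProperConvexLSC {E : Type*} [NormedAddCommGroup E] [InnerProductSpace ℝ E]
    (g : E → EReal) : Prop :=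
  (∃ x, g x ≠ ⊤) ∧ (∀ x, g x ≠ ⊥) ∧ LowerSemicontinuous g ∧
    ∀ x y : E, ∀ a b : ℝ, 0 ≤ a → 0 ≤ b → a + b = 1 →
      g (a • x + b • y) ≤ (a : EReal) * g x + (b : EReal) * g y

private lemma ereal_ne_top_of_add_le_coe {a : EReal} {r s : ℝ}
    (h : a + (r : EReal) ≤ (s : EReal)) : a ≠ ⊤ := by
  intro ha
  rw [ha, EReal.top_add_coe] at h
  exact EReal.coe_ne_top s (top_le_iff.1 h)

set_option maxHeartbeats 4000000 in
theorem statement0 (n m : ℕ)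
    (g : EuclideanSpace ℝ (Fin m) → EReal) (hg : ProperConvexLSC g)
    (b : EuclideanSpace ℝ (Fin m))
    (L : EuclideanSpace ℝ (Fin n) →L[ℝ] EuclideanSpace ℝ (Fin m))
    (α : ℝ) (hα : 0 < α)
    (hL : L.comp (ContinuousLinearMap.adjoint L) =
      α • ContinuousLinearMap.id ℝ (EuclideanSpace ℝ (Fin m)))
    (f : EuclideanSpace ℝ (Fin n) → EReal)
    (hf : ∀ x, f x = g (L x + b)) :
    ∀ (x : EuclideanSpace ℝ (Fin n)) (p : EuclideanSpace ℝ (Fin m)),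
      IsProxPt (fun z => (α : EReal) * g z) (L x + b) p →
        ∀ q : EuclideanSpace ℝ (Fin n),
          IsProxPt f x q ↔
            q = x + α⁻¹ • (ContinuousLinearMap.adjoint L) (p - L x - b) := by
  obtain ⟨⟨x₀, hx₀⟩, hbot, _, hconv⟩ := hg
  set A := ContinuousLinearMap.adjoint L with hAdef
  -- basic facts about L and its adjoint
  have hadj : ∀ u, L (A u) = α • u := by
    intro u
    have := congrArg (fun T => T u) hL
    simpa using this
  have hAnorm : ∀ u, ‖A u‖ ^ 2 = α * ‖u‖ ^ 2 := by
    intro u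
    have h1 : ⟪A u, A u⟫ = ⟪u, L (A u)⟫ :=
      ContinuousLinearMap.adjoint_inner_left L _ u
    calc ‖A u‖ ^ 2 = ⟪A u, A u⟫ := (real_inner_self_eq_norm_sq _).symm
      _ = ⟪u, α • u⟫ := by rw [h1, hadj]
      _ = α * ‖u‖ ^ 2 := by rw [real_inner_smul_right, real_inner_self_eq_norm_sq]
  have hLnorm : ∀ w, ‖L w‖ ^ 2 ≤ α * ‖w‖ ^ 2 := by
    intro w
    by_cases h0 : L w = 0
    · rw [h0]; simp; positivity
    · have h5 : ‖L w‖ ^ 2 = ⟪w, A (L w)⟫ := by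
        rw [hAdef, ContinuousLinearMap.adjoint_inner_right, real_inner_self_eq_norm_sq]
      have h2 := real_inner_le_norm w (A (L w))
      have h3 : ‖A (L w)‖ ^ 2 = α * ‖L w‖ ^ 2 := hAnorm _
      have h4 : (0 : ℝ) < ‖L w‖ := norm_pos_iff.2 h0
      have hc : (0 : ℝ) < ‖L w‖ ^ 2 := by positivity
      have h6 : ‖L w‖ ^ 2 * ‖L w‖ ^ 2 ≤ (‖w‖ * ‖A (L w)‖) ^ 2 := by
        rw [← h5] at h2
        nlinarith [hc.le, norm_nonneg w, norm_nonneg (A (L w))]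
      have h7 : (‖w‖ * ‖A (L w)‖) ^ 2 = ‖w‖ ^ 2 * (α * ‖L w‖ ^ 2) := by
        rw [mul_pow, h3]
      nlinarith [h6, h7, hc]
  intro x p hp q
  set z := L x + b with hz
  set q' := x + α⁻¹ • A (p - L x - b) with hq'def
  have hpzb : p - L x - b = p - z := by rw [hz, sub_sub]
  have hLq' : L q' + b = p := by
    have h1 : L q' = L x + α⁻¹ • (α • (p - L x - b)) := by
      rw [hq'def, map_add, map_smul, hadj]
    rw [h1, smul_smul, inv_mul_cancel₀ hα.ne', one_smul]
    abel
  have hq'x : q' - x = α⁻¹ • A (p - z) := by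
    rw [hq'def, hpzb]; abel
  have hnq' : ‖q' - x‖ ^ 2 = α⁻¹ * ‖p - z‖ ^ 2 := by
    rw [hq'x, norm_smul, mul_pow, hAnorm, Real.norm_eq_abs,
      abs_of_pos (inv_pos.2 hα)]
    field_simp
  -- g p is finite
  have hgp_ne_top : g p ≠ ⊤ := by
    intro htop
    obtain ⟨r₀, hr₀⟩ : ∃ r : ℝ, g x₀ = (r : EReal) :=
      ⟨_, (EReal.coe_toReal hx₀ (hbot x₀)).symm⟩
    have h := hp x₀
    simp only [htop, hr₀] at h
    rw [EReal.mul_top_of_pos (by exact_mod_cast hα), EReal.top_add_coe] at h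
    have hne : ((α : EReal) * (r₀ : EReal) + (((1:ℝ)/2 * ‖x₀ - z‖ ^ 2 : ℝ) : EReal)) ≠ ⊤ := by
      rw [← EReal.coe_mul, ← EReal.coe_add]
      exact EReal.coe_ne_top _
    exact hne (top_le_iff.1 h)
  set gp := (g p).toReal with hgpdef
  have hgp : g p = (gp : EReal) := (EReal.coe_toReal hgp_ne_top (hbot p)).symm
  -- real form of the prox property of p
  have hpR : ∀ v, g v ≠ ⊤ →
      α * gp + (1:ℝ)/2 * ‖p - z‖ ^ 2 ≤ α * (g v).toReal + (1:ℝ)/2 * ‖v - z‖ ^ 2 := by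
    intro v hv
    obtain ⟨rv, hrv⟩ : ∃ r : ℝ, g v = (r : EReal) :=
      ⟨_, (EReal.coe_toReal hv (hbot v)).symm⟩
    have h := hp v
    simp only [hgp, hrv] at h
    rw [hrv, EReal.toReal_coe]
    exact_mod_cast h
  -- q' is a prox point of f at x
  have hq'prox : IsProxPt f x q' := by
    intro u
    rw [hf q', hf u, hLq', hgp]
    by_cases hu : g (L u + b) = ⊤
    · rw [hu, EReal.top_add_coe]; exact le_top
    · set gu := (g (L u + b)).toReal with hgudef
      have hgu : g (L u + b) = (gu : EReal) := (EReal.coe_toReal hu (hbot _)).symm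
      rw [hgu]
      have h1 := hpR (L u + b) hu
      have hLux : L u + b - z = L (u - x) := by rw [hz, map_sub]; abel
      rw [hLux] at h1
      have h2 := hLnorm (u - x)
      have e1 : α * ((1:ℝ)/2 * ‖q' - x‖ ^ 2) = (1:ℝ)/2 * ‖p - z‖ ^ 2 := by
        rw [hnq']; field_simp
      have key : α * (gp + (1:ℝ)/2 * ‖q' - x‖ ^ 2) ≤ α * (gu + (1:ℝ)/2 * ‖u - x‖ ^ 2) := by
        nlinarith [h1, h2, e1]
      have := (mul_le_mul_iff_right₀ hα).1 key
      exact_mod_cast this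
  constructor
  · -- forward: any prox point equals q'
    intro hq
    have h0 := hq q'
    rw [hf q, hf q', hLq', hgp] at h0
    have hgv_ne_top : g (L q + b) ≠ ⊤ := by
      refine ereal_ne_top_of_add_le_coe (r := (1:ℝ)/2 * ‖q - x‖ ^ 2) (s := gp + (1:ℝ)/2 * ‖q' - x‖ ^ 2) ?_
      calc g (L q + b) + (((1:ℝ)/2 * ‖q - x‖ ^ 2 : ℝ) : EReal)
          ≤ (gp : EReal) + (((1:ℝ)/2 * ‖q' - x‖ ^ 2 : ℝ) : EReal) := h0
        _ = ((gp + (1:ℝ)/2 * ‖q' - x‖ ^ 2 : ℝ) : EReal) := by push_cast; ring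
    set gv := (g (L q + b)).toReal with hgvdef
    have hgv : g (L q + b) = (gv : EReal) := (EReal.coe_toReal hgv_ne_top (hbot _)).symm
    rw [hgv] at h0
    have hI : gv + (1:ℝ)/2 * ‖q - x‖ ^ 2 ≤ gp + (1:ℝ)/2 * ‖q' - x‖ ^ 2 := by
      exact_mod_cast h0
    have hvz : L q + b - z = L (q - x) := by rw [hz, map_sub]; abel
    have hII : ‖L q + b - z‖ ^ 2 ≤ α * ‖q - x‖ ^ 2 := by rw [hvz]; exact hLnorm _
    have hIII := hpR (L q + b) hgv_ne_top
    rw [← hgvdef] at hIII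
    have e2 : α * ((1:ℝ)/2 * ‖q' - x‖ ^ 2) = (1:ℝ)/2 * ‖p - z‖ ^ 2 := by
      rw [hnq']; field_simp
    have hIα : α * gv + α * ((1:ℝ)/2 * ‖q - x‖ ^ 2) ≤ α * gp + (1:ℝ)/2 * ‖p - z‖ ^ 2 := by
      nlinarith [mul_le_mul_of_nonneg_left hI hα.le, e2]
    have hVQ : ‖L q + b - z‖ ^ 2 = α * ‖q - x‖ ^ 2 := by
      refine le_antisymm hII ?_
      nlinarith [hIα, hIII]
    have eqIII : α * gv + (1:ℝ)/2 * ‖L q + b - z‖ ^ 2 = α * gp + (1:ℝ)/2 * ‖p - z‖ ^ 2 := by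
      refine le_antisymm ?_ hIII
      nlinarith [hIα, hVQ]
    -- uniqueness of the prox point of α•g : the midpoint argument gives L q + b = p
    have hveqp : L q + b = p := by
      set v := L q + b with hvdef
      set mp := ((1:ℝ)/2) • v + ((1:ℝ)/2) • p with hmpdef
      have hconvm := hconv v p ((1:ℝ)/2) ((1:ℝ)/2) (by norm_num) (by norm_num) (by norm_num)
      rw [hgv, hgp] at hconvm
      have hconvm' : g mp ≤ (((1:ℝ)/2 * gv + (1:ℝ)/2 * gp : ℝ) : EReal) := by
        rw [hmpdef]
        refine le_trans hconvm (le_of_eq ?_)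
        norm_cast
      have hgm_ne_top : g mp ≠ ⊤ :=
        (lt_of_le_of_lt hconvm' (EReal.coe_lt_top _)).ne
      have hgmR : (g mp).toReal ≤ (1:ℝ)/2 * gv + (1:ℝ)/2 * gp := by
        rw [← EReal.coe_toReal hgm_ne_top (hbot mp)] at hconvm'
        exact_mod_cast hconvm'
      have hIV := hpR mp hgm_ne_top
      have hmz : mp - z = ((1:ℝ)/2) • ((v - z) + (p - z)) := by
        rw [hmpdef]
        module
      have hnm : ‖mp - z‖ ^ 2 =
          (1:ℝ)/4 * (‖v - z‖ ^ 2 + 2 * ⟪v - z, p - z⟫ + ‖p - z‖ ^ 2) := by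
        rw [hmz, norm_smul, mul_pow, norm_add_sq_real]
        rw [Real.norm_eq_abs]
        norm_num
      have hvp : ‖v - p‖ ^ 2 = ‖v - z‖ ^ 2 - 2 * ⟪v - z, p - z⟫ + ‖p - z‖ ^ 2 := by
        have : v - p = (v - z) - (p - z) := by abel
        rw [this, norm_sub_sq_real]
      have hmul := mul_le_mul_of_nonneg_left hgmR hα.le
      have hvp0 : ‖v - p‖ ^ 2 ≤ 0 := by nlinarith [hIV, hnm, hvp, hmul, eqIII]
      have hn0 : ‖v - p‖ = 0 := by nlinarith [norm_nonneg (v - p), sq_nonneg ‖v - p‖]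
      exact sub_eq_zero.1 (norm_eq_zero.1 hn0)
    -- now ‖q-x‖² = ‖q'-x‖² and Pythagoras gives q = q'
    have hPeq : ‖L q + b - z‖ ^ 2 = ‖p - z‖ ^ 2 := by rw [hveqp]
    have hQ : ‖q - x‖ ^ 2 = ‖q' - x‖ ^ 2 := by
      have h9 : α * ‖q - x‖ ^ 2 = ‖p - z‖ ^ 2 := by rw [← hPeq, hVQ]
      rw [hnq', ← h9, inv_mul_cancel_left₀ hα.ne']
    have hLqq' : L q = L q' := by
      have h1 : L q = p - b := eq_sub_of_add_eq hveqp
      have h2 : L q' = p - b := eq_sub_of_add_eq hLq'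
      rw [h1, h2]
    have hinner : ⟪q - q', q' - x⟫ = 0 := by
      rw [hq'x, real_inner_smul_right, hAdef,
        ContinuousLinearMap.adjoint_inner_right, map_sub, hLqq', sub_self,
        inner_zero_left]
      ring
    have hpyth : ‖q - x‖ ^ 2 = ‖q - q'‖ ^ 2 + 2 * ⟪q - q', q' - x⟫ + ‖q' - x‖ ^ 2 := by
      have hdec : q - x = (q - q') + (q' - x) := by abel
      rw [hdec, norm_add_sq_real]
    have hqq' : ‖q - q'‖ ^ 2 = 0 := by
      rw [hinner] at hpyth
      linarith [hQ, hpyth]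
    have hn0 : ‖q - q'‖ = 0 := by nlinarith [norm_nonneg (q - q'), sq_nonneg ‖q - q'‖]
    exact sub_eq_zero.1 (norm_eq_zero.1 hn0)
  · intro h
    subst h
    exact hq'prox
end
end

section
/- Let g : ℝ^m → ℝ ∪ {∞} be a proper convex lower semicontinuous function and let A : ℝ^n → ℝ^m be a linear map satisfying Aᵀ A = α·Id for some constant α > 0. Define the operator approx_f : ℝ^n → ℝ^n by approx_f(x) = α⁻¹ Aᵀ prox_{αg}(Ax). Then there exists a convex lower semicontinuous function φ : ℝ^n → ℝ ∪ {∞} such that approx_f = prox_φ; in particular, approx_f is a proximal operator. -/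
noncomputable section

/-- `g` is convex and lower semicontinuous, with values in `ℝ ∪ {∞}`. -/
def ConvexLSC {E : Type*} [NormedAddCommGroup E] [InnerProductSpace ℝ E]
    (g : E → EReal) : Prop :=
  (∀ x, g x ≠ ⊥) ∧ LowerSemicontinuous g ∧
    ∀ x y : E, ∀ a b : ℝ, 0 ≤ a → 0 ≤ b → a + b = 1 →
      g (a • x + b • y) ≤ (a : EReal) * g x + (b : EReal) * g y

section helpers

variable {E : Type*} [NormedAddCommGroup E] [InnerProductSpace ℝ E]

lemma normsq_smul_add (a b : ℝ) (x y : E) :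
    ‖a • x + b • y‖ ^ 2
      = a ^ 2 * ‖x‖ ^ 2 + 2 * (a * b) * (inner ℝ x y : ℝ) + b ^ 2 * ‖y‖ ^ 2 := by
  rw [norm_add_sq_real, real_inner_smul_left, real_inner_smul_right, norm_smul, norm_smul]
  simp [mul_pow, sq_abs]
  ring

lemma normsq_convex (a b : ℝ) (ha : 0 ≤ a) (hb : 0 ≤ b) (hab : a + b = 1) (x y : E) :
    ‖a • x + b • y‖ ^ 2 ≤ a * ‖x‖ ^ 2 + b * ‖y‖ ^ 2 := by
  have h2 := norm_sub_sq_real x y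
  have h3 : 0 ≤ a * b * ‖x - y‖ ^ 2 := by positivity
  rw [h2] at h3
  nlinarith [normsq_smul_add a b x y, h3]

lemma normsq_midpoint (u v w : E) :
    ‖(1/2 : ℝ) • u + (1/2 : ℝ) • v - w‖ ^ 2
      = 1/2 * ‖u - w‖ ^ 2 + 1/2 * ‖v - w‖ ^ 2 - 1/4 * ‖u - v‖ ^ 2 := by
  have h : (1/2 : ℝ) • u + (1/2 : ℝ) • v - w = (1/2 : ℝ) • (u - w) + (1/2 : ℝ) • (v - w) := by
    module
  rw [h, normsq_smul_add]
  have h2 := norm_sub_sq_real (u - w) (v - w)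
  rw [sub_sub_sub_cancel_right] at h2
  nlinarith [h2]

end helpers

set_option maxHeartbeats 4000000 in
theorem statement4 (n m : ℕ)
    (g : EuclideanSpace ℝ (Fin m) → EReal) (hg : ProperConvexLSC g)
    (A : EuclideanSpace ℝ (Fin n) →L[ℝ] EuclideanSpace ℝ (Fin m))
    (α : ℝ) (hα : 0 < α)
    (hA : (ContinuousLinearMap.adjoint A).comp A =
      α • ContinuousLinearMap.id ℝ (EuclideanSpace ℝ (Fin n)))
    (P : EuclideanSpace ℝ (Fin m) → EuclideanSpace ℝ (Fin m))
    (hP : ∀ x, IsProxPt (fun z => (α : EReal) * g z) x (P x)) :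
    ∃ φ : EuclideanSpace ℝ (Fin n) → EReal, ConvexLSC φ ∧
      ∀ (x q : EuclideanSpace ℝ (Fin n)),
        IsProxPt φ x q ↔ q = α⁻¹ • (ContinuousLinearMap.adjoint A) (P (A x)) := by
  obtain ⟨⟨x₀, hx₀⟩, hgbot, hglsc, hgconv⟩ := hg
  have hαne : α ≠ 0 := ne_of_gt hα
  set B := ContinuousLinearMap.adjoint A with hB
  -- basic geometry of A and B
  have hBA : ∀ u, B (A u) = α • u := by
    intro u
    have := ContinuousLinearMap.ext_iff.1 hA u
    simpa using this
  have hAnormsq : ∀ u, ‖A u‖ ^ 2 = α * ‖u‖ ^ 2 := by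
    intro u
    have h1 : (inner ℝ (B (A u)) u : ℝ) = inner ℝ (A u) (A u) :=
      ContinuousLinearMap.adjoint_inner_left A u (A u)
    rw [hBA u, real_inner_smul_left, real_inner_self_eq_norm_sq,
      real_inner_self_eq_norm_sq] at h1
    linarith
  have hip : ∀ (v : EuclideanSpace ℝ (Fin m)) (u : EuclideanSpace ℝ (Fin n)),
      (inner ℝ (B v) u : ℝ) = inner ℝ v (A u) := fun v u =>
    ContinuousLinearMap.adjoint_inner_left A u v
  have hBnormsq : ∀ v, ‖B v‖ ^ 2 ≤ α * ‖v‖ ^ 2 := by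
    intro v
    have h1 : (inner ℝ (B v) (B v) : ℝ) = inner ℝ v (A (B v)) :=
      ContinuousLinearMap.adjoint_inner_left A (B v) v
    have h2 := real_inner_mul_inner_self_le v (A (B v))
    rw [← h1] at h2
    simp only [real_inner_self_eq_norm_sq] at h2
    rw [hAnormsq] at h2
    rcases eq_or_lt_of_le (sq_nonneg ‖B v‖) with h | h
    · nlinarith
    · nlinarith
  -- the quadratic correction term
  set creal : EuclideanSpace ℝ (Fin m) → ℝ :=
    fun p => 1/(2*α) * ‖p‖ ^ 2 - 1/(2*α^2) * ‖B p‖ ^ 2 with hcreal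
  have hcreal_alt : ∀ p, creal p = 1/(2*α) * ‖p - α⁻¹ • A (B p)‖ ^ 2 := by
    intro p
    rw [hcreal]
    have h1 : ‖α⁻¹ • A (B p)‖ ^ 2 = α⁻¹ * ‖B p‖ ^ 2 := by
      rw [norm_smul, mul_pow, hAnormsq]
      simp [sq_abs]
      field_simp
    have h2 : (inner ℝ p (α⁻¹ • A (B p)) : ℝ) = α⁻¹ * ‖B p‖ ^ 2 := by
      rw [real_inner_smul_right, ← hip, real_inner_self_eq_norm_sq]
    rw [norm_sub_sq_real, h1, h2]
    field_simp
    ring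
  have hkey : ∀ (q : EuclideanSpace ℝ (Fin n)) (p : EuclideanSpace ℝ (Fin m)),
      B p = α • q → ∀ x : EuclideanSpace ℝ (Fin n),
      creal p + 1/2 * ‖q - x‖ ^ 2 = 1/(2*α) * ‖p - A x‖ ^ 2 := by
    intro q p hp x
    have e1 : ‖B p‖ ^ 2 = α ^ 2 * ‖q‖ ^ 2 := by
      rw [hp, norm_smul]; simp [mul_pow, sq_abs]
    have e2 : (inner ℝ p (A x) : ℝ) = α * inner ℝ q x := by
      rw [← hip, hp, real_inner_smul_left]
    have e3 := hAnormsq x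
    rw [norm_sub_sq_real p (A x), norm_sub_sq_real q x, hcreal]
    simp only [e1, e2, e3]
    field_simp
    ring
  have hcreal_convex : ∀ (p1 p2 : EuclideanSpace ℝ (Fin m)) (a b : ℝ),
      0 ≤ a → 0 ≤ b → a + b = 1 →
      creal (a • p1 + b • p2) ≤ a * creal p1 + b * creal p2 := by
    intro p1 p2 a b ha hb hab
    rw [hcreal_alt, hcreal_alt, hcreal_alt]
    have hL : (a • p1 + b • p2) - α⁻¹ • A (B (a • p1 + b • p2))
        = a • (p1 - α⁻¹ • A (B p1)) + b • (p2 - α⁻¹ • A (B p2)) := by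
      simp only [map_add, map_smul, smul_add, smul_sub]
      module
    rw [hL]
    have h := normsq_convex a b ha hb hab (p1 - α⁻¹ • A (B p1)) (p2 - α⁻¹ • A (B p2))
    have hpos : (0:ℝ) ≤ 1/(2*α) := by positivity
    have h' := mul_le_mul_of_nonneg_left h hpos
    have e : (1/(2*α)) * (a * ‖p1 - α⁻¹ • A (B p1)‖ ^ 2 + b * ‖p2 - α⁻¹ • A (B p2)‖ ^ 2)
        = a * (1/(2*α) * ‖p1 - α⁻¹ • A (B p1)‖ ^ 2)
          + b * (1/(2*α) * ‖p2 - α⁻¹ • A (B p2)‖ ^ 2) := by ring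
    linarith [h', e.le, e.ge]
  have hcreal_cont : Continuous creal := by
    rw [hcreal]
    fun_prop
  -- properness of `P` values and the optimal value function
  have hgP : ∀ v, g (P v) = ((g (P v)).toReal : EReal) := by
    intro v
    refine (EReal.coe_toReal ?_ (hgbot _)).symm
    intro htop
    have h := hP v x₀
    simp only at h
    have hgx0 : g x₀ = ((g x₀).toReal : EReal) := (EReal.coe_toReal hx₀ (hgbot _)).symm
    rw [htop, EReal.coe_mul_top_of_pos hα, EReal.top_add_coe, hgx0,
      ← EReal.coe_mul, ← EReal.coe_add] at h
    exact EReal.coe_ne_top _ (top_le_iff.mp h)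
  set Mreal : EuclideanSpace ℝ (Fin m) → ℝ :=
    fun v => α * (g (P v)).toReal + 1/2 * ‖P v - v‖ ^ 2 with hMreal
  -- strong minimality of the prox point
  have hstrong : ∀ (v u : EuclideanSpace ℝ (Fin m)),
      ((Mreal v + 1/4 * ‖u - P v‖ ^ 2 : ℝ) : EReal)
        ≤ (α : EReal) * g u + (((1:ℝ)/2 * ‖u - v‖ ^ 2 : ℝ) : EReal) := by
    intro v u
    by_cases hgu : g u = ⊤
    · rw [hgu, EReal.coe_mul_top_of_pos hα, EReal.top_add_coe]
      exact le_top
    have hgu' : g u = ((g u).toReal : EReal) := (EReal.coe_toReal hgu (hgbot _)).symm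
    set ru := (g u).toReal
    set rv := (g (P v)).toReal with hrv
    set mid := (1/2 : ℝ) • u + (1/2 : ℝ) • (P v) with hmid
    have hconv := hgconv u (P v) (1/2) (1/2) (by norm_num) (by norm_num) (by norm_num)
    rw [hgu', hgP v] at hconv
    have hconv' : g mid ≤ ((1/2 * ru + 1/2 * rv : ℝ) : EReal) := by
      rw [EReal.coe_add, EReal.coe_mul, EReal.coe_mul]
      exact hconv
    have hmidtop : g mid ≠ ⊤ := by
      intro h; rw [h] at hconv'; exact (EReal.coe_lt_top _).not_ge hconv'
    have hgmid : g mid = ((g mid).toReal : EReal) := (EReal.coe_toReal hmidtop (hgbot _)).symm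
    set rm := (g mid).toReal
    have hrm : rm ≤ 1/2 * ru + 1/2 * rv := by
      rw [hgmid] at hconv'; exact_mod_cast hconv'
    have hprox := hP v mid
    simp only at hprox
    rw [hgP v, hgmid] at hprox
    simp only [← EReal.coe_mul, ← EReal.coe_add] at hprox
    have hproxR : α * rv + 1/2 * ‖P v - v‖ ^ 2 ≤ α * rm + 1/2 * ‖mid - v‖ ^ 2 := by
      exact_mod_cast hprox
    have hmidn := normsq_midpoint u (P v) v
    rw [hgu']
    rw [← EReal.coe_mul, ← EReal.coe_add, EReal.coe_le_coe_iff]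
    rw [hMreal]
    simp only []
    rw [← hmid] at hmidn
    nlinarith [hproxR, hmidn, hrm, hα.le]
  -- the candidate function
  set G : EuclideanSpace ℝ (Fin m) → EReal := fun p => g p + ((creal p : ℝ) : EReal)
    with hGdef
  set φ : EuclideanSpace ℝ (Fin n) → EReal :=
    fun q => sInf (G '' {p | B p = α • q}) with hφdef
  set q₀ : EuclideanSpace ℝ (Fin n) → EuclideanSpace ℝ (Fin n) :=
    fun x => α⁻¹ • B (P (A x)) with hq₀def
  have hBq₀ : ∀ x, B (P (A x)) = α • q₀ x := by
    intro x
    rw [hq₀def]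
    simp only [smul_smul]
    rw [mul_inv_cancel₀ hαne, one_smul]
  -- lower bound for φ
  have hφLB : ∀ (x q : EuclideanSpace ℝ (Fin n)),
      ((α⁻¹ * Mreal (A x) + 1/4 * ‖q - q₀ x‖ ^ 2 - 1/2 * ‖q - x‖ ^ 2 : ℝ) : EReal) ≤ φ q := by
    intro x q
    rw [hφdef]
    apply le_sInf
    rintro z ⟨p, hp, rfl⟩
    simp only [Set.mem_setOf_eq] at hp
    by_cases hgp : g p = ⊤
    · rw [hGdef]
      simp only
      rw [hgp, EReal.top_add_coe]
      exact le_top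
    have hgp' : g p = ((g p).toReal : EReal) := (EReal.coe_toReal hgp (hgbot _)).symm
    set rp := (g p).toReal
    have hs := hstrong (A x) p
    rw [hgp', ← EReal.coe_mul, ← EReal.coe_add, EReal.coe_le_coe_iff] at hs
    have hq0 : α * ‖q - q₀ x‖ ^ 2 ≤ ‖p - P (A x)‖ ^ 2 := by
      have h1 : B (p - P (A x)) = α • (q - q₀ x) := by
        rw [map_sub, hp, hBq₀ x, ← smul_sub]
      have h2 := hBnormsq (p - P (A x))
      rw [h1, norm_smul] at h2
      rw [Real.norm_eq_abs, abs_of_pos hα] at h2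
      refine le_of_mul_le_mul_left ?_ hα
      nlinarith [h2]
    have hck := hkey q p hp x
    have hGp : G p = ((rp + creal p : ℝ) : EReal) := by
      rw [hGdef]
      simp only
      rw [hgp', ← EReal.coe_add]
    rw [hGp, EReal.coe_le_coe_iff]
    have h7 : α⁻¹ * (Mreal (A x) + 1/4 * ‖p - P (A x)‖ ^ 2)
        ≤ α⁻¹ * (α * rp + (1:ℝ)/2 * ‖p - A x‖ ^ 2) :=
      mul_le_mul_of_nonneg_left hs (by positivity)
    have e1 : α⁻¹ * (α * rp + (1:ℝ)/2 * ‖p - A x‖ ^ 2)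
        = rp + 1/(2*α) * ‖p - A x‖ ^ 2 := by field_simp
    have e2 : α⁻¹ * (Mreal (A x) + 1/4 * ‖p - P (A x)‖ ^ 2)
        = α⁻¹ * Mreal (A x) + 1/(4*α) * ‖p - P (A x)‖ ^ 2 := by field_simp
    rw [e1, e2] at h7
    have h8 : 1/(4*α) * (α * ‖q - q₀ x‖ ^ 2) ≤ 1/(4*α) * ‖p - P (A x)‖ ^ 2 :=
      mul_le_mul_of_nonneg_left hq0 (by positivity)
    have e3 : 1/(4*α) * (α * ‖q - q₀ x‖ ^ 2) = 1/4 * ‖q - q₀ x‖ ^ 2 := by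
      field_simp
    rw [e3] at h8
    linarith [h7, h8, hck]
  -- upper bound at q₀
  have hφUB : ∀ x : EuclideanSpace ℝ (Fin n),
      φ (q₀ x) ≤ ((α⁻¹ * Mreal (A x) - 1/2 * ‖q₀ x - x‖ ^ 2 : ℝ) : EReal) := by
    intro x
    have hmem : G (P (A x)) ∈ G '' {p | B p = α • q₀ x} :=
      ⟨P (A x), hBq₀ x, rfl⟩
    refine le_trans (sInf_le hmem) ?_
    obtain ⟨c, hc⟩ : ∃ c : ℝ, g (P (A x)) = ((c : ℝ) : EReal) := ⟨_, hgP (A x)⟩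
    have htr : (g (P (A x))).toReal = c := by rw [hc]; exact rfl
    have hGP : G (P (A x)) = ((c + creal (P (A x)) : ℝ) : EReal) := by
      rw [hGdef]
      simp only
      rw [hc, ← EReal.coe_add]
    rw [hGP, EReal.coe_le_coe_iff]
    have hck := hkey (q₀ x) (P (A x)) (hBq₀ x) x
    have e : α⁻¹ * Mreal (A x)
        = c + 1/(2*α) * ‖P (A x) - A x‖ ^ 2 := by
      rw [hMreal]
      simp only
      rw [htr]
      field_simp
    linarith [hck, e.le, e.ge]
  have hφbot : ∀ q, φ q ≠ ⊥ := by
    intro q h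
    have := hφLB q q
    rw [h] at this
    exact (EReal.bot_lt_coe _).not_ge this
  -- value comparisons for the prox characterization
  have hval0 : ∀ x, φ (q₀ x) + (((1:ℝ)/2 * ‖q₀ x - x‖ ^ 2 : ℝ) : EReal)
      ≤ ((α⁻¹ * Mreal (A x) : ℝ) : EReal) := by
    intro x
    calc φ (q₀ x) + (((1:ℝ)/2 * ‖q₀ x - x‖ ^ 2 : ℝ) : EReal)
        ≤ ((α⁻¹ * Mreal (A x) - 1/2 * ‖q₀ x - x‖ ^ 2 : ℝ) : EReal)
            + (((1:ℝ)/2 * ‖q₀ x - x‖ ^ 2 : ℝ) : EReal) := add_le_add_left (hφUB x) _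
      _ = ((α⁻¹ * Mreal (A x) : ℝ) : EReal) := by
          rw [← EReal.coe_add]; congr 1; ring
  have hval1 : ∀ x u, ((α⁻¹ * Mreal (A x) + 1/4 * ‖u - q₀ x‖ ^ 2 : ℝ) : EReal)
      ≤ φ u + (((1:ℝ)/2 * ‖u - x‖ ^ 2 : ℝ) : EReal) := by
    intro x u
    calc ((α⁻¹ * Mreal (A x) + 1/4 * ‖u - q₀ x‖ ^ 2 : ℝ) : EReal)
        = ((α⁻¹ * Mreal (A x) + 1/4 * ‖u - q₀ x‖ ^ 2 - 1/2 * ‖u - x‖ ^ 2 : ℝ) : EReal)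
            + (((1:ℝ)/2 * ‖u - x‖ ^ 2 : ℝ) : EReal) := by
          rw [← EReal.coe_add]; congr 1; ring
      _ ≤ φ u + (((1:ℝ)/2 * ‖u - x‖ ^ 2 : ℝ) : EReal) := add_le_add_left (hφLB x u) _
  -- the prox characterization
  have hiff : ∀ x q, IsProxPt φ x q ↔ q = q₀ x := by
    intro x q
    constructor
    · intro h
      have h1 := h (q₀ x)
      have h2 : φ q + (((1:ℝ)/2 * ‖q - x‖ ^ 2 : ℝ) : EReal)
          ≤ ((α⁻¹ * Mreal (A x) : ℝ) : EReal) := le_trans h1 (hval0 x)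
      have h3 := le_trans (hval1 x q) h2
      rw [EReal.coe_le_coe_iff] at h3
      have h4 : ‖q - q₀ x‖ ^ 2 ≤ 0 := by linarith
      have h5 : ‖q - q₀ x‖ = 0 := by nlinarith [norm_nonneg (q - q₀ x), sq_nonneg ‖q - q₀ x‖]
      rw [norm_sub_eq_zero_iff] at h5
      exact h5
    · rintro rfl
      intro u
      refine le_trans (hval0 x) (le_trans ?_ (hval1 x u))
      rw [EReal.coe_le_coe_iff]
      nlinarith [sq_nonneg ‖u - q₀ x‖]
  -- convexity of φ
  have hconvφ : ∀ q1 q2 : EuclideanSpace ℝ (Fin n), ∀ a b : ℝ,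
      0 ≤ a → 0 ≤ b → a + b = 1 →
      φ (a • q1 + b • q2) ≤ (a : EReal) * φ q1 + (b : EReal) * φ q2 := by
    intro q1 q2 a b ha hb hab
    rcases eq_or_lt_of_le ha with rfl | ha'
    · have hb1 : b = 1 := by linarith
      subst hb1
      simp only [zero_smul, one_smul, zero_add, EReal.coe_zero, EReal.coe_one, zero_mul,
        one_mul]
      exact le_refl _
    rcases eq_or_lt_of_le hb with rfl | hb'
    · have ha1 : a = 1 := by linarith
      subst ha1
      simp only [zero_smul, one_smul, add_zero, EReal.coe_zero, EReal.coe_one, zero_mul,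
        one_mul]
      exact le_refl _
    have hmulnb : ∀ (c : ℝ) (z : EReal), 0 < c → z ≠ ⊥ → (c : EReal) * z ≠ ⊥ := by
      intro c z hc hz
      by_cases ht : z = ⊤
      · rw [ht, EReal.coe_mul_top_of_pos hc]; exact top_ne_bot
      · rw [(EReal.coe_toReal ht hz).symm, ← EReal.coe_mul]
        exact EReal.coe_ne_bot _
    by_cases h1 : φ q1 = ⊤
    · rw [h1, EReal.coe_mul_top_of_pos ha',
        EReal.top_add_of_ne_bot (hmulnb b (φ q2) hb' (hφbot q2))]
      exact le_top
    by_cases h2 : φ q2 = ⊤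
    · rw [h2, EReal.coe_mul_top_of_pos hb']
      rw [EReal.add_top_of_ne_bot (hmulnb a (φ q1) ha' (hφbot q1))]
      exact le_top
    have hφq1 : φ q1 = ((φ q1).toReal : EReal) := (EReal.coe_toReal h1 (hφbot q1)).symm
    have hφq2 : φ q2 = ((φ q2).toReal : EReal) := (EReal.coe_toReal h2 (hφbot q2)).symm
    set r1 := (φ q1).toReal with hr1
    set r2 := (φ q2).toReal with hr2
    by_contra hlt
    push_neg at hlt
    rw [hφq1, hφq2, ← EReal.coe_mul, ← EReal.coe_mul, ← EReal.coe_add] at hlt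
    obtain ⟨z, hz1, hz2⟩ := exists_between hlt
    have hzbot : z ≠ ⊥ := fun h => by rw [h] at hz1; exact (EReal.bot_lt_coe _).not_gt hz1
    have hztop : z ≠ ⊤ := fun h => by rw [h] at hz2; exact not_top_lt hz2
    have hzr : z = ((z.toReal : ℝ) : EReal) := (EReal.coe_toReal hztop hzbot).symm
    set rz := z.toReal with hrz
    rw [hzr] at hz1 hz2
    set ε := rz - (a * r1 + b * r2) with hε
    have hεpos : 0 < ε := by
      have := EReal.coe_lt_coe_iff.mp hz1
      rw [hε]; linarith
    -- select near-optimal points in each fiber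
    have hsel : ∀ (qq : EuclideanSpace ℝ (Fin n)) (rr : ℝ), φ qq = ((rr : ℝ) : EReal) →
        ∃ p, B p = α • qq ∧ ∃ gp : ℝ, g p = ((gp : ℝ) : EReal) ∧ gp + creal p < rr + ε := by
      intro qq rr hrr
      have hlt' : φ qq < ((rr + ε : ℝ) : EReal) := by
        rw [hrr]; exact_mod_cast (by linarith : rr < rr + ε)
      rw [hφdef] at hlt'
      obtain ⟨zz, ⟨p, hp, rfl⟩, hzz⟩ := sInf_lt_iff.mp hlt'
      refine ⟨p, hp, ?_⟩
      have hgptop : g p ≠ ⊤ := by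
        intro h
        rw [hGdef] at hzz
        simp only at hzz
        rw [h, EReal.top_add_coe] at hzz
        exact not_top_lt hzz
      refine ⟨(g p).toReal, (EReal.coe_toReal hgptop (hgbot _)).symm, ?_⟩
      rw [hGdef] at hzz
      simp only at hzz
      rw [(EReal.coe_toReal hgptop (hgbot _)).symm, ← EReal.coe_add] at hzz
      exact_mod_cast hzz
    obtain ⟨p1, hp1, g1, hg1, hg1'⟩ := hsel q1 r1 hφq1
    obtain ⟨p2, hp2, g2, hg2, hg2'⟩ := hsel q2 r2 hφq2
    have hfiber : B (a • p1 + b • p2) = α • (a • q1 + b • q2) := by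
      rw [map_add, map_smul, map_smul, hp1, hp2]
      module
    have hle : φ (a • q1 + b • q2) ≤ G (a • p1 + b • p2) := by
      rw [hφdef]
      exact sInf_le ⟨a • p1 + b • p2, hfiber, rfl⟩
    have hgc := hgconv p1 p2 a b ha hb hab
    rw [hg1, hg2, ← EReal.coe_mul, ← EReal.coe_mul, ← EReal.coe_add] at hgc
    have hcc := hcreal_convex p1 p2 a b ha hb hab
    have hGle : G (a • p1 + b • p2) ≤ ((a * g1 + b * g2 + creal (a • p1 + b • p2) : ℝ)
        : EReal) := by
      rw [hGdef]
      simp only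
      calc g (a • p1 + b • p2) + ((creal (a • p1 + b • p2) : ℝ) : EReal)
          ≤ ((a * g1 + b * g2 : ℝ) : EReal) + ((creal (a • p1 + b • p2) : ℝ) : EReal) :=
            add_le_add_left hgc _
        _ = _ := by rw [← EReal.coe_add]
    have hfin : ((a * g1 + b * g2 + creal (a • p1 + b • p2) : ℝ) : EReal)
        ≤ ((rz : ℝ) : EReal) := by
      rw [EReal.coe_le_coe_iff]
      have h1' : a * (g1 + creal p1) ≤ a * (r1 + ε) :=
        mul_le_mul_of_nonneg_left hg1'.le ha
      have h2' : b * (g2 + creal p2) ≤ b * (r2 + ε) :=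
        mul_le_mul_of_nonneg_left hg2'.le hb
      nlinarith [hcc, h1', h2']
    have : φ (a • q1 + b • q2) ≤ ((rz : ℝ) : EReal) :=
      le_trans hle (le_trans hGle hfin)
    exact hz2.not_ge this
  -- lower semicontinuity of φ
  have hφlsc : LowerSemicontinuous φ := by
    intro q y hy
    induction y using EReal.rec with
    | bot =>
      filter_upwards with q' using (hφbot q').bot_lt
    | top => exact absurd hy not_top_lt
    | coe yr =>
      obtain ⟨z, hz1, hz2⟩ := exists_between hy
      have hzbot : z ≠ ⊥ := fun h => by rw [h] at hz1; exact (EReal.bot_lt_coe _).not_gt hz1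
      have hztop : z ≠ ⊤ := fun h => by rw [h] at hz2; exact not_top_lt hz2
      have hzr : z = ((z.toReal : ℝ) : EReal) := (EReal.coe_toReal hztop hzbot).symm
      set r := z.toReal with hr
      rw [hzr] at hz1 hz2
      suffices hcl : ∃ δ > 0, ∀ q' : EuclideanSpace ℝ (Fin n),
          dist q' q < δ → ((r : ℝ) : EReal) ≤ φ q' by
        obtain ⟨δ, hδ, hδ2⟩ := hcl
        rw [Metric.eventually_nhds_iff]
        exact ⟨δ, hδ, fun q' h => lt_of_lt_of_le hz1 (hδ2 q' h)⟩
      by_contra hcon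
      push_neg at hcon
      have hcon' : ∀ k : ℕ, ∃ q' : EuclideanSpace ℝ (Fin n),
          dist q' q < 1/((k:ℝ)+1) ∧ φ q' < ((r : ℝ) : EReal) := by
        intro k
        obtain ⟨q', hq1, hq2⟩ := hcon (1/((k:ℝ)+1)) (by positivity)
        exact ⟨q', hq1, hq2⟩
      choose qs hqs1 hqs2 using hcon'
      have hps : ∀ k, ∃ p, B p = α • qs k ∧ G p < ((r : ℝ) : EReal) := by
        intro k
        have h := hqs2 k
        rw [hφdef] at h
        obtain ⟨zz, ⟨p, hp, rfl⟩, hzz⟩ := sInf_lt_iff.mp h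
        exact ⟨p, hp, hzz⟩
      choose ps hps1 hps2 using hps
      have hgkreal : ∀ k, g (ps k) = (((g (ps k)).toReal : ℝ) : EReal) := by
        intro k
        refine (EReal.coe_toReal ?_ (hgbot _)).symm
        intro h
        have h2 := hps2 k
        rw [hGdef] at h2
        simp only at h2
        rw [h, EReal.top_add_coe] at h2
        exact not_top_lt h2
      set rs : ℕ → ℝ := fun k => (g (ps k)).toReal with hrs
      have hrsk : ∀ k, rs k + creal (ps k) < r := by
        intro k
        have h2 := hps2 k
        rw [hGdef] at h2
        simp only at h2
        rw [hgkreal k, ← EReal.coe_add] at h2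
        exact_mod_cast h2
      have hbound : ∀ k, Mreal 0 + 1/4 * ‖ps k - P 0‖ ^ 2
          ≤ α * rs k + 1/2 * ‖ps k‖ ^ 2 := by
        intro k
        have h := hstrong 0 (ps k)
        rw [hgkreal k, ← EReal.coe_mul, ← EReal.coe_add, EReal.coe_le_coe_iff] at h
        rw [sub_zero] at h
        exact h
      have hcfib : ∀ k, creal (ps k) + 1/2 * ‖qs k‖ ^ 2 = 1/(2*α) * ‖ps k‖ ^ 2 := by
        intro k
        have h := hkey (qs k) (ps k) (hps1 k) 0
        simpa [sub_zero, map_zero] using h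
      have hqsn : ∀ k, ‖qs k‖ ≤ ‖q‖ + 1 := by
        intro k
        have h1 : dist (qs k) q < 1 := by
          refine lt_of_lt_of_le (hqs1 k) ?_
          rw [div_le_one (by positivity)]
          have : (0:ℝ) ≤ (k:ℝ) := Nat.cast_nonneg k
          linarith
        have h2 := norm_sub_norm_le (qs k) q
        rw [← dist_eq_norm] at h2
        linarith
      set C := 4*α*r + 2*α*(‖q‖+1)^2 - 4*(Mreal 0) with hC
      have hpsb : ∀ k, ‖ps k - P 0‖ ^ 2 ≤ C := by
        intro k
        have h1 := hbound k
        have h2 := hrsk k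
        have h3 := hcfib k
        have h4 := hqsn k
        rw [hC]
        generalize hcp : creal (ps k) = cpk at h2 h3
        generalize hrk : rs k = rk at h1 h2
        generalize hM : Mreal 0 = M0 at h1 ⊢
        have h5 : α * rk < α * r - 1/2 * ‖ps k‖ ^ 2 + α/2 * ‖qs k‖ ^ 2 := by
          have h6 : rk < r - 1/(2*α) * ‖ps k‖ ^ 2 + 1/2 * ‖qs k‖ ^ 2 := by linarith
          have h7 := mul_lt_mul_of_pos_left h6 hα
          have e : α * (r - 1/(2*α) * ‖ps k‖ ^ 2 + 1/2 * ‖qs k‖ ^ 2)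
              = α * r - 1/2 * ‖ps k‖ ^ 2 + α/2 * ‖qs k‖ ^ 2 := by
            field_simp
          linarith [h7, e.le, e.ge]
        have h6 : ‖qs k‖ ^ 2 ≤ (‖q‖+1) ^ 2 := by
          nlinarith [norm_nonneg (qs k), norm_nonneg q]
        have h7 : α/2 * ‖qs k‖ ^ 2 ≤ α/2 * (‖q‖+1) ^ 2 :=
          mul_le_mul_of_nonneg_left h6 (by positivity)
        linarith
      have hC0 : 0 ≤ C := le_trans (sq_nonneg _) (hpsb 0)
      set R := ‖P 0‖ + Real.sqrt C with hR
      have hmemb : ∀ k, ps k ∈ Metric.closedBall (0 : EuclideanSpace ℝ (Fin m)) R := by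
        intro k
        rw [Metric.mem_closedBall, dist_zero_right]
        have h1 : ‖ps k - P 0‖ ≤ Real.sqrt C :=
          (Real.le_sqrt (norm_nonneg _) hC0).mpr (hpsb k)
        calc ‖ps k‖ = ‖(ps k - P 0) + P 0‖ := by rw [sub_add_cancel]
          _ ≤ ‖ps k - P 0‖ + ‖P 0‖ := norm_add_le _ _
          _ ≤ R := by rw [hR]; linarith
      obtain ⟨pinf, -, σ, hσ, hconv⟩ :=
        tendsto_subseq_of_bounded Metric.isBounded_closedBall hmemb
      have hqst : Filter.Tendsto qs Filter.atTop (nhds q) := by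
        rw [tendsto_iff_dist_tendsto_zero]
        exact squeeze_zero (fun k => dist_nonneg) (fun k => (hqs1 k).le)
          tendsto_one_div_add_atTop_nhds_zero_nat
      have hfib : B pinf = α • q := by
        have ht1 : Filter.Tendsto (fun j => B (ps (σ j))) Filter.atTop (nhds (B pinf)) :=
          (B.continuous.tendsto pinf).comp hconv
        have ht2 : Filter.Tendsto (fun j => B (ps (σ j))) Filter.atTop (nhds (α • q)) := by
          simp only [hps1]
          exact (hqst.comp hσ.tendsto_atTop).const_smul α
        exact tendsto_nhds_unique ht1 ht2
      have hφqle : φ q ≤ G pinf := by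
        rw [hφdef]
        exact sInf_le ⟨pinf, hfib, rfl⟩
      have hrG : ((r : ℝ) : EReal) < G pinf := lt_of_lt_of_le hz2 hφqle
      set cinf := creal pinf with hcinf
      have hsexists : ∃ s : ℝ, r - cinf < s ∧ ((s : ℝ) : EReal) < g pinf := by
        by_cases h : g pinf = ⊤
        · exact ⟨r - cinf + 1, by linarith, by rw [h]; exact EReal.coe_lt_top _⟩
        · have hreal : g pinf = (((g pinf).toReal : ℝ) : EReal) :=
            (EReal.coe_toReal h (hgbot _)).symm
          have hlt : r - cinf < (g pinf).toReal := by
            have h2 := hrG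
            rw [hGdef] at h2
            simp only at h2
            rw [hreal, ← EReal.coe_add] at h2
            have := EReal.coe_lt_coe_iff.mp h2
            linarith
          obtain ⟨s, hs1, hs2⟩ := exists_between hlt
          exact ⟨s, hs1, by rw [hreal]; exact_mod_cast hs2⟩
      obtain ⟨s, hs1, hs2⟩ := hsexists
      have hev1 : ∀ᶠ j in Filter.atTop, ((s : ℝ) : EReal) < g (ps (σ j)) :=
        hconv.eventually (hglsc pinf ((s : ℝ) : EReal) hs2)
      have hev2 : ∀ᶠ j in Filter.atTop, r - s < creal (ps (σ j)) := by
        have ht : Filter.Tendsto (fun j => creal (ps (σ j))) Filter.atTop (nhds cinf) :=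
          (hcreal_cont.tendsto pinf).comp hconv
        exact ht.eventually (eventually_gt_nhds (by linarith : r - s < cinf))
      obtain ⟨j, hj1, hj2⟩ := (hev1.and hev2).exists
      have hj3 : s < rs (σ j) := by
        rw [hgkreal (σ j)] at hj1
        exact_mod_cast hj1
      have hj4 := hrsk (σ j)
      generalize hcp : creal (ps (σ j)) = cpj at hj2 hj4
      generalize hrk : rs (σ j) = rj at hj3 hj4
      linarith
  refine ⟨φ, ⟨hφbot, hφlsc, hconvφ⟩, ?_⟩
  intro x q
  exact hiff x q
end
end

section
/- Let g : ℝ^m → ℝ ∪ {∞} be a proper convex lower semicontinuous function and let A : ℝ^n → ℝ^m be a linear map satisfying Aᵀ A = α·Id for some constant α > 0. Define approx_f : ℝ^n → ℝ^n by approx_f(x) = α⁻¹ Aᵀ prox_{αg}(Ax). Then approx_f is non-expansive: for all y, y′ ∈ ℝ^n, ‖approx_f(y) − approx_f(y′)‖ ≤ ‖y − y′‖. -/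
noncomputable section

open scoped RealInnerProductSpace in
lemma key_subgrad {E : Type*} [NormedAddCommGroup E] [InnerProductSpace ℝ E]
    (h : E → EReal) (x p q : E)
    (hp : IsProxPt h x p) (hpf : h p ≠ ⊤) (hpb : h p ≠ ⊥)
    (hqf : h q ≠ ⊤) (hqb : h q ≠ ⊥)
    (hconv : ∀ t : ℝ, 0 ≤ t → t ≤ 1 →
      h ((1 - t) • p + t • q) ≤ (((1 - t) * (h p).toReal + t * (h q).toReal : ℝ) : EReal)) :
    ⟪x - p, q - p⟫ ≤ (h q).toReal - (h p).toReal := by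
  set a := (h p).toReal with ha
  set b := (h q).toReal with hb
  have hpe : h p = (a : EReal) := (EReal.coe_toReal hpf hpb).symm
  set c := (⟪x - p, q - p⟫ : ℝ) with hc
  set C := (1/2 : ℝ) * ‖q - p‖^2 with hC
  have hC0 : 0 ≤ C := by positivity
  have main : ∀ t : ℝ, 0 < t → t ≤ 1 → c ≤ b - a + t * C := by
    intro t ht0 ht1
    have h1 := hp ((1 - t) • p + t • q)
    have h2 := hconv t ht0.le ht1
    set u := (1 - t) • p + t • q with hu
    have h3 : ((a + (1:ℝ)/2 * ‖p - x‖^2 : ℝ) : EReal)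
        ≤ (((1-t)*a + t*b + (1:ℝ)/2 * ‖u - x‖^2 : ℝ) : EReal) := by
      rw [EReal.coe_add, EReal.coe_add, ← hpe]
      exact le_trans h1 (add_le_add_left h2 _)
    rw [EReal.coe_le_coe_iff] at h3
    -- expand ‖u - x‖²
    have hux : u - x = (p - x) + t • (q - p) := by
      rw [hu]; module
    have hexp : ‖u - x‖^2 = ‖p - x‖^2 + 2 * (t * ⟪p - x, q - p⟫) + t^2 * ‖q - p‖^2 := by
      rw [hux, norm_add_sq_real, real_inner_smul_right, norm_smul]
      rw [mul_pow]
      simp [Real.norm_eq_abs, sq_abs]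
    have hcc : (⟪p - x, q - p⟫ : ℝ) = -c := by
      rw [hc, ← inner_neg_left]; congr 1; abel
    rw [hexp, hcc] at h3
    nlinarith [h3, ht0]
  by_contra hcon
  push_neg at hcon
  set s := c - (b - a) with hs
  have hs0 : 0 < s := by simp [hs]; linarith
  have ht := main (min 1 (s / (2*C + 2))) (by positivity) (min_le_left _ _)
  have hle : min 1 (s / (2*C + 2)) ≤ s / (2*C+2) := min_le_right _ _
  have : min 1 (s / (2*C + 2)) * C ≤ s / (2*C+2) * C := by nlinarith
  have h2 : s / (2*C+2) * C < s := by
    rw [div_mul_eq_mul_div, div_lt_iff₀ (by linarith)]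
    nlinarith
  linarith

open scoped RealInnerProductSpace in
lemma prox_nonexp {E : Type*} [NormedAddCommGroup E] [InnerProductSpace ℝ E]
    (h : E → EReal) (x y p q : E)
    (hp : IsProxPt h x p) (hq : IsProxPt h y q)
    (hpf : h p ≠ ⊤) (hpb : h p ≠ ⊥) (hqf : h q ≠ ⊤) (hqb : h q ≠ ⊥)
    (hconv : ∀ u v : E, h u ≠ ⊤ → h u ≠ ⊥ → h v ≠ ⊤ → h v ≠ ⊥ →
      ∀ t : ℝ, 0 ≤ t → t ≤ 1 →
      h ((1 - t) • u + t • v) ≤ (((1 - t) * (h u).toReal + t * (h v).toReal : ℝ) : EReal)) :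
    ‖p - q‖ ≤ ‖x - y‖ := by
  have c1 := key_subgrad h x p q hp hpf hpb hqf hqb (hconv p q hpf hpb hqf hqb)
  have c2 := key_subgrad h y q p hq hqf hqb hpf hpb (hconv q p hqf hqb hpf hpb)
  have key : ‖p - q‖^2 ≤ ⟪x - y, p - q⟫ := by
    have e1 : (⟪x - p, q - p⟫ : ℝ) = -⟪x - p, p - q⟫ := by
      rw [← inner_neg_right]; congr 1; abel
    have e2 : (⟪x - y, p - q⟫ : ℝ) = ⟪x - p, p - q⟫ - ⟪y - q, p - q⟫ + ‖p - q‖^2 := by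
      have : x - y = (x - p) - (y - q) + (p - q) := by abel
      rw [this, inner_add_left, inner_sub_left, real_inner_self_eq_norm_sq]
    rw [e1] at c1
    linarith
  have cs := real_inner_le_norm (x - y) (p - q)
  nlinarith [norm_nonneg (p - q), norm_nonneg (x - y)]

open scoped RealInnerProductSpace in
theorem statement5 (n m : ℕ)
    (g : EuclideanSpace ℝ (Fin m) → EReal) (hg : ProperConvexLSC g)
    (A : EuclideanSpace ℝ (Fin n) →L[ℝ] EuclideanSpace ℝ (Fin m))
    (α : ℝ) (hα : 0 < α)
    (hA : (ContinuousLinearMap.adjoint A).comp A =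
      α • ContinuousLinearMap.id ℝ (EuclideanSpace ℝ (Fin n)))
    (P : EuclideanSpace ℝ (Fin m) → EuclideanSpace ℝ (Fin m))
    (hP : ∀ x, IsProxPt (fun z => (α : EReal) * g z) x (P x)) :
    ∀ y y' : EuclideanSpace ℝ (Fin n),
      ‖α⁻¹ • (ContinuousLinearMap.adjoint A) (P (A y)) -
          α⁻¹ • (ContinuousLinearMap.adjoint A) (P (A y'))‖ ≤ ‖y - y'‖ := by
  obtain ⟨⟨u0, hu0⟩, hgbot, _, hgconv⟩ := hg
  set h : EuclideanSpace ℝ (Fin m) → EReal := fun z => (α : EReal) * g z with hh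
  have hreal : ∀ z, g z ≠ ⊤ → h z = ((α * (g z).toReal : ℝ) : EReal) := by
    intro z hz
    have hz2 : g z = ((g z).toReal : EReal) := (EReal.coe_toReal hz (hgbot z)).symm
    rw [hh]; simp only; rw [EReal.coe_mul, ← hz2]
  have hgtop : ∀ z, h z ≠ ⊤ → g z ≠ ⊤ := by
    intro z hz hgz
    apply hz
    rw [hh]; simp only [hgz]
    exact EReal.coe_mul_top_of_pos hα
  have hbot : ∀ z, h z ≠ ⊥ := by
    intro z
    by_cases hz : g z = ⊤
    · rw [hh]; simp only [hz, EReal.coe_mul_top_of_pos hα]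
      exact top_ne_bot
    · rw [hreal z hz]; exact EReal.coe_ne_bot _
  have htop' : ∀ z, g z ≠ ⊤ → h z ≠ ⊤ := fun z hz => by
    rw [hreal z hz]; exact EReal.coe_ne_top _
  have htopP : ∀ x, h (P x) ≠ ⊤ := by
    intro x hx
    have h1 := hP x u0
    rw [hx, hreal u0 hu0, EReal.top_add_coe, ← EReal.coe_add] at h1
    exact (EReal.coe_lt_top _).not_ge h1
  have hconv : ∀ u v : EuclideanSpace ℝ (Fin m), h u ≠ ⊤ → h u ≠ ⊥ → h v ≠ ⊤ → h v ≠ ⊥ →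
      ∀ t : ℝ, 0 ≤ t → t ≤ 1 →
      h ((1 - t) • u + t • v) ≤ (((1 - t) * (h u).toReal + t * (h v).toReal : ℝ) : EReal) := by
    intro u v huf _ hvf _ t ht0 ht1
    have hgu : g u ≠ ⊤ := hgtop u huf
    have hgv : g v ≠ ⊤ := hgtop v hvf
    have hc := hgconv u v (1 - t) t (by linarith) ht0 (by ring)
    have hgur : g u = ((g u).toReal : EReal) := (EReal.coe_toReal hgu (hgbot u)).symm
    have hgvr : g v = ((g v).toReal : EReal) := (EReal.coe_toReal hgv (hgbot v)).symm
    rw [hgur, hgvr, ← EReal.coe_mul, ← EReal.coe_mul, ← EReal.coe_add] at hc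
    have hwf : g ((1 - t) • u + t • v) ≠ ⊤ := ne_top_of_le_ne_top (EReal.coe_ne_top _) hc
    have hwr : g ((1 - t) • u + t • v) = (((g ((1 - t) • u + t • v)).toReal : ℝ) : EReal) :=
      (EReal.coe_toReal hwf (hgbot _)).symm
    rw [hwr, EReal.coe_le_coe_iff] at hc
    rw [hreal _ hwf, hreal u hgu, hreal v hgv]
    rw [EReal.toReal_coe, EReal.toReal_coe, EReal.coe_le_coe_iff]
    nlinarith
  have hAz : ∀ z, ‖A z‖^2 = α * ‖z‖^2 := by
    intro z
    have h1 : (ContinuousLinearMap.adjoint A) (A z) = α • z := by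
      have := congrArg (fun T => T z) hA
      simpa using this
    have h2 : (⟪(ContinuousLinearMap.adjoint A) (A z), z⟫ : ℝ) = ⟪A z, A z⟫ :=
      ContinuousLinearMap.adjoint_inner_left A z (A z)
    rw [h1, real_inner_smul_left, real_inner_self_eq_norm_sq,
      real_inner_self_eq_norm_sq] at h2
    linarith
  have hAn : ∀ z, ‖A z‖ = Real.sqrt α * ‖z‖ := by
    intro z
    have h1 : ‖A z‖ = Real.sqrt (‖A z‖^2) := (Real.sqrt_sq (norm_nonneg _)).symm
    rw [h1, hAz z, Real.sqrt_mul hα.le, Real.sqrt_sq (norm_nonneg z)]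
  have hAT : ∀ v, ‖(ContinuousLinearMap.adjoint A) v‖ ≤ Real.sqrt α * ‖v‖ := by
    intro v
    have h2 : (⟪(ContinuousLinearMap.adjoint A) v, (ContinuousLinearMap.adjoint A) v⟫ : ℝ)
        = ⟪v, A ((ContinuousLinearMap.adjoint A) v)⟫ := by
      rw [ContinuousLinearMap.adjoint_inner_left, real_inner_comm]
    have h3 := real_inner_le_norm v (A ((ContinuousLinearMap.adjoint A) v))
    rw [← h2, real_inner_self_eq_norm_sq, hAn] at h3
    rcases eq_or_lt_of_le (norm_nonneg ((ContinuousLinearMap.adjoint A) v)) with he | he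
    · rw [← he]; positivity
    · nlinarith [Real.sqrt_nonneg α, norm_nonneg v]
  intro y y'
  have hPn : ‖P (A y) - P (A y')‖ ≤ ‖A y - A y'‖ :=
    prox_nonexp h (A y) (A y') (P (A y)) (P (A y')) (hP (A y)) (hP (A y'))
      (htopP (A y)) (hbot _) (htopP (A y')) (hbot _) hconv
  have e1 : α⁻¹ • (ContinuousLinearMap.adjoint A) (P (A y)) -
      α⁻¹ • (ContinuousLinearMap.adjoint A) (P (A y'))
      = α⁻¹ • (ContinuousLinearMap.adjoint A) (P (A y) - P (A y')) := by
    rw [map_sub, smul_sub]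
  rw [e1, norm_smul, Real.norm_eq_abs, abs_of_pos (inv_pos.mpr hα)]
  have e2 : ‖A y - A y'‖ = Real.sqrt α * ‖y - y'‖ := by rw [← map_sub, hAn]
  calc α⁻¹ * ‖(ContinuousLinearMap.adjoint A) (P (A y) - P (A y'))‖
      ≤ α⁻¹ * (Real.sqrt α * ‖P (A y) - P (A y')‖) :=
        mul_le_mul_of_nonneg_left (hAT _) (inv_pos.mpr hα).le
    _ ≤ α⁻¹ * (Real.sqrt α * (Real.sqrt α * ‖y - y'‖)) := by
        rw [e2] at hPn
        exact mul_le_mul_of_nonneg_left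
          (mul_le_mul_of_nonneg_left hPn (Real.sqrt_nonneg α)) (inv_pos.mpr hα).le
    _ = ‖y - y'‖ := by
        rw [show α⁻¹ * (Real.sqrt α * (Real.sqrt α * ‖y - y'‖))
            = α⁻¹ * (Real.sqrt α * Real.sqrt α) * ‖y - y'‖ from by ring,
          Real.mul_self_sqrt hα.le, inv_mul_cancel₀ hα.ne', one_mul]
end
end

section
/- Let g : ℝ^m → ℝ ∪ {∞} be a proper convex lower semicontinuous function and let A : ℝ^n → ℝ^m be a linear map satisfying Aᵀ A = α·Id for some constant α > 0. Define approx_f : ℝ^n → ℝ^n by approx_f(x) = α⁻¹ Aᵀ prox_{αg}(Ax). Then approx_f is the proximal operator of the function φ : ℝ^n → ℝ ∪ {∞} defined by φ(x) = α⁻¹ · inf over y ∈ ℝ^m of [ α g(y) + (1/2)‖Ax − y‖² + ι_{N(Aᵀ)}(Ax − y) ], where N(Aᵀ) denotes the null space of Aᵀ; that is, approx_f = prox_φ. -/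
noncomputable section

open scoped Classical

/-- The `(0, ∞)`-valued indicator function of a set. -/
def eindicator {E : Type*} (C : Set E) (x : E) : EReal :=
  if x ∈ C then (0 : EReal) else ⊤

private lemma ereal_cases {x : EReal} (h1 : x ≠ ⊥) (h2 : x ≠ ⊤) : ∃ c : ℝ, x = (c : EReal) := by
  induction x using EReal.rec with
  | bot => exact absurd rfl h1
  | coe c => exact ⟨c, rfl⟩
  | top => exact absurd rfl h2

private lemma mul_coe_le_of_le {a b : ℝ} (ha : 0 < a) {I : EReal} (h : (b : EReal) ≤ I) :
    ((a * b : ℝ) : EReal) ≤ (a : EReal) * I := by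
  induction I using EReal.rec with
  | bot => exact absurd h (by simp)
  | coe c =>
    rw [← EReal.coe_mul, EReal.coe_le_coe_iff]
    exact mul_le_mul_of_nonneg_left (EReal.coe_le_coe_iff.mp h) ha.le
  | top =>
    rw [EReal.mul_top_of_pos (by exact_mod_cast ha)]
    exact le_top

private lemma mul_coe_le_of_le' {a b : ℝ} (ha : 0 < a) {I : EReal} (h : I ≤ (b : EReal)) :
    (a : EReal) * I ≤ ((a * b : ℝ) : EReal) := by
  induction I using EReal.rec with
  | bot => rw [EReal.mul_bot_of_pos (by exact_mod_cast ha)]; exact bot_le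
  | coe c =>
    rw [← EReal.coe_mul, EReal.coe_le_coe_iff]
    exact mul_le_mul_of_nonneg_left (EReal.coe_le_coe_iff.mp h) ha.le
  | top => exact absurd h (by simp)

private lemma lb_aux {a c d : ℝ} (ha : 0 < a) {I : EReal} (h : ((c : ℝ) : EReal) ≤ I) :
    ((a * c + d : ℝ) : EReal) ≤ (a : EReal) * I + ((d : ℝ) : EReal) := by
  rw [EReal.coe_add]
  exact add_le_add_left (mul_coe_le_of_le ha h) _

private lemma ub_aux {a c d : ℝ} (ha : 0 < a) {I : EReal} (h : I ≤ ((c : ℝ) : EReal)) :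
    (a : EReal) * I + ((d : ℝ) : EReal) ≤ ((a * c + d : ℝ) : EReal) := by
  rw [EReal.coe_add]
  exact add_le_add_left (mul_coe_le_of_le' ha h) _

set_option maxHeartbeats 1000000 in
theorem statement6 (n m : ℕ)
    (g : EuclideanSpace ℝ (Fin m) → EReal) (hg : ProperConvexLSC g)
    (A : EuclideanSpace ℝ (Fin n) →L[ℝ] EuclideanSpace ℝ (Fin m))
    (α : ℝ) (hα : 0 < α)
    (hA : (ContinuousLinearMap.adjoint A).comp A =
      α • ContinuousLinearMap.id ℝ (EuclideanSpace ℝ (Fin n)))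
    (P : EuclideanSpace ℝ (Fin m) → EuclideanSpace ℝ (Fin m))
    (hP : ∀ x, IsProxPt (fun z => (α : EReal) * g z) x (P x))
    (φ : EuclideanSpace ℝ (Fin n) → EReal)
    (hφ : ∀ x, φ x = ((α⁻¹ : ℝ) : EReal) *
      ⨅ y : EuclideanSpace ℝ (Fin m),
        ((α : EReal) * g y + (((1 : ℝ) / 2 * ‖A x - y‖ ^ 2 : ℝ) : EReal) +
          eindicator {v | (ContinuousLinearMap.adjoint A) v = 0} (A x - y))) :
    ∀ (x q : EuclideanSpace ℝ (Fin n)),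
      IsProxPt φ x q ↔ q = α⁻¹ • (ContinuousLinearMap.adjoint A) (P (A x)) := by
  intro x q
  set B := ContinuousLinearMap.adjoint A with hBdef
  -- basic identities
  have hαne : α ≠ 0 := ne_of_gt hα
  have hAv : ∀ v, B (A v) = α • v := by
    intro v
    have := congrArg (fun T => T v) hA
    simpa using this
  have hnormAv : ∀ v : EuclideanSpace ℝ (Fin n), ‖A v‖ ^ 2 = α * ‖v‖ ^ 2 := by
    intro v
    have h1 : (inner ℝ (B (A v)) v : ℝ) = inner ℝ (A v) (A v) :=
      ContinuousLinearMap.adjoint_inner_left A v (A v)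
    rw [hAv v, real_inner_smul_left, real_inner_self_eq_norm_sq] at h1
    rw [← real_inner_self_eq_norm_sq, ← h1]
  have horth : ∀ (u : EuclideanSpace ℝ (Fin n)) (y : EuclideanSpace ℝ (Fin m)),
      B (A u - y) = 0 → ‖y - A x‖ ^ 2 = ‖A u - y‖ ^ 2 + α * ‖u - x‖ ^ 2 := by
    intro u y h
    have hdecomp : y - A x = (y - A u) + A (u - x) := by
      rw [map_sub]; abel
    have hB0 : B (y - A u) = 0 := by
      have : y - A u = -(A u - y) := by abel
      rw [this, map_neg, h, neg_zero]
    have hin : (inner ℝ (y - A u) (A (u - x)) : ℝ) = 0 := by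
      rw [← ContinuousLinearMap.adjoint_inner_left, ← hBdef, hB0, inner_zero_left]
    rw [hdecomp, norm_add_sq_real, hin, hnormAv (u - x), norm_sub_rev y (A u)]
    ring
  -- properness data
  obtain ⟨z₀, hz₀top⟩ := hg.1
  have hgbot := hg.2.1
  have hgconv := hg.2.2.2
  obtain ⟨c₀, hc₀⟩ := ereal_cases (hgbot z₀) hz₀top
  set p := P (A x) with hpdef
  have hPp := hP (A x)
  -- g p is real
  have hgp_real : ∃ c : ℝ, g p = (c : EReal) := by
    have h1 := hPp z₀
    simp only [hc₀] at h1
    have hne_top : (α : EReal) * g p ≠ ⊤ := by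
      intro htop
      rw [htop, EReal.top_add_of_ne_bot (EReal.coe_ne_bot _)] at h1
      exact (EReal.coe_lt_top _).not_ge h1
    have hgp_ne_top : g p ≠ ⊤ := by
      intro htop
      rw [htop, EReal.mul_top_of_pos (by exact_mod_cast hα : (0:EReal) < (α:ℝ))] at hne_top
      exact hne_top rfl
    exact ereal_cases (hgbot p) hgp_ne_top
  obtain ⟨gp, hgp⟩ := hgp_real
  set r : ℝ := α * gp + (1:ℝ)/2*‖p - A x‖^2 with hrdef
  -- strong minimality
  have hstrong : ∀ z : EuclideanSpace ℝ (Fin m),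
      ((r + (1:ℝ)/4*‖z - p‖^2 : ℝ) : EReal) ≤ (α : EReal) * g z + (((1:ℝ)/2*‖z - A x‖^2 : ℝ) : EReal) := by
    intro z
    by_cases hz : g z = ⊤
    · rw [hz, EReal.mul_top_of_pos (by exact_mod_cast hα : (0:EReal) < (α:ℝ)),
        EReal.top_add_of_ne_bot (EReal.coe_ne_bot _)]
      exact le_top
    · obtain ⟨gz, hgz⟩ := ereal_cases (hgbot z) hz
      have hc := hgconv p z (1/2) (1/2) (by norm_num) (by norm_num) (by norm_num)
      set mid := (1/2:ℝ) • p + (1/2:ℝ) • z with hmiddef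
      have hmid_ne_top : g mid ≠ ⊤ := by
        intro h
        rw [h, hgp, hgz, ← EReal.coe_mul, ← EReal.coe_mul, ← EReal.coe_add] at hc
        exact (EReal.coe_lt_top _).not_ge hc
      obtain ⟨gm, hgm⟩ := ereal_cases (hgbot mid) hmid_ne_top
      have hcR : gm ≤ 1/2*gp + 1/2*gz := by
        rw [hgm, hgp, hgz] at hc
        exact_mod_cast hc
      have hmR : α*gp + (1:ℝ)/2*‖p - A x‖^2 ≤ α*gm + (1:ℝ)/2*‖mid - A x‖^2 := by
        have h5 := hPp mid
        rw [← hpdef] at h5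
        simp only [hgp, hgm] at h5
        exact_mod_cast h5
      have hpar : ‖mid - A x‖^2 = 1/2*‖p - A x‖^2 + 1/2*‖z - A x‖^2 - 1/4*‖p - z‖^2 := by
        have h1 : mid - A x = (1/2:ℝ) • ((p - A x) + (z - A x)) := by
          rw [hmiddef]; module
        have h2 := parallelogram_law_with_norm ℝ (p - A x) (z - A x)
        have h3 : (p - A x) - (z - A x) = p - z := by abel
        rw [h3] at h2
        rw [h1, norm_smul, Real.norm_eq_abs, abs_of_nonneg (by norm_num : (0:ℝ) ≤ 1/2)]
        linear_combination h2 / 4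
      have hnrm2 : ‖z - p‖^2 = ‖p - z‖^2 := by rw [norm_sub_rev]
      have hfin : r + (1:ℝ)/4*‖z - p‖^2 ≤ α*gz + (1:ℝ)/2*‖z - A x‖^2 := by
        rw [hrdef, hnrm2]
        nlinarith [hmR, hcR, hpar, mul_le_mul_of_nonneg_left hcR hα.le]
      rw [hgz]
      exact_mod_cast hfin
  have hαE : (0:EReal) < (α:ℝ) := by exact_mod_cast hα
  have hαinv : 0 < α⁻¹ := inv_pos.mpr hα
  have hind_eq : ∀ v : EuclideanSpace ℝ (Fin m), B v = 0 →
      eindicator {v | B v = 0} v = 0 := by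
    intro v hv; simp [eindicator, hv]
  have hind_ne : ∀ v : EuclideanSpace ℝ (Fin m), B v ≠ 0 →
      eindicator {v | B v = 0} v = ⊤ := by
    intro v hv; simp [eindicator, hv]
  have hmul_ne_bot : ∀ y, (α:EReal) * g y ≠ ⊥ := by
    intro y
    by_cases hy : g y = ⊤
    · rw [hy, EReal.mul_top_of_pos hαE]; simp
    · obtain ⟨c, hc⟩ := ereal_cases (hgbot y) hy
      rw [hc, ← EReal.coe_mul]; exact EReal.coe_ne_bot _
  -- pointwise lower bound for the infimand
  have hGlb : ∀ (u : EuclideanSpace ℝ (Fin n)) (y : EuclideanSpace ℝ (Fin m)),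
      ((r - α*((1:ℝ)/2*‖u - x‖^2) + (1:ℝ)/4*‖y - p‖^2 : ℝ) : EReal) ≤
        (α : EReal) * g y + (((1:ℝ)/2*‖A u - y‖^2 : ℝ) : EReal) +
          eindicator {v | B v = 0} (A u - y) := by
    intro u y
    by_cases hc : B (A u - y) = 0
    · rw [hind_eq _ hc, add_zero]
      have horth' := horth u y hc
      by_cases hz : g y = ⊤
      · rw [hz, EReal.mul_top_of_pos hαE, EReal.top_add_of_ne_bot (EReal.coe_ne_bot _)]
        exact le_top
      · obtain ⟨gy, hgy⟩ := ereal_cases (hgbot y) hz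
        have hs := hstrong y
        rw [hgy] at hs
        have hsR : r + (1:ℝ)/4*‖y - p‖^2 ≤ α*gy + (1:ℝ)/2*‖y - A x‖^2 := by
          exact_mod_cast hs
        rw [hgy]
        have hfin : r - α*((1:ℝ)/2*‖u - x‖^2) + (1:ℝ)/4*‖y - p‖^2 ≤
            α*gy + (1:ℝ)/2*‖A u - y‖^2 := by nlinarith [hsR, horth']
        exact_mod_cast hfin
    · rw [hind_ne _ hc, EReal.add_top_of_ne_bot]
      · exact le_top
      · intro hb
        rcases EReal.add_eq_bot_iff.mp hb with h | h
        · exact hmul_ne_bot y h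
        · exact EReal.coe_ne_bot _ h
  -- lower bound for the infimum
  have hIlb : ∀ u : EuclideanSpace ℝ (Fin n),
      ((r - α*((1:ℝ)/2*‖u - x‖^2) : ℝ) : EReal) ≤
        ⨅ y, ((α : EReal) * g y + (((1:ℝ)/2*‖A u - y‖^2 : ℝ) : EReal) +
          eindicator {v | B v = 0} (A u - y)) := by
    intro u
    refine le_iInf fun y => le_trans ?_ (hGlb u y)
    exact EReal.coe_le_coe_iff.mpr (by nlinarith [sq_nonneg ‖y - p‖])
  -- global lower bound on the prox objective of φ
  have hΦlb : ∀ u : EuclideanSpace ℝ (Fin n),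
      ((α⁻¹ * r : ℝ) : EReal) ≤ φ u + (((1:ℝ)/2*‖u - x‖^2 : ℝ) : EReal) := by
    intro u
    rw [hφ u]
    have heq : α⁻¹ * r = α⁻¹ * (r - α*((1:ℝ)/2*‖u - x‖^2)) + (1:ℝ)/2*‖u - x‖^2 := by
      field_simp
      ring
    rw [heq]
    exact lb_aux hαinv (hIlb u)
  -- the candidate point
  set q₀ : EuclideanSpace ℝ (Fin n) := α⁻¹ • B p with hq₀def
  have hconstr : B (A q₀ - p) = 0 := by
    rw [map_sub, hAv q₀, hq₀def, smul_smul, mul_inv_cancel₀ hαne, one_smul, sub_self]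
  have hIub : (⨅ y, ((α : EReal) * g y + (((1:ℝ)/2*‖A q₀ - y‖^2 : ℝ) : EReal) +
      eindicator {v | B v = 0} (A q₀ - y))) ≤
        ((α * gp + (1:ℝ)/2*‖A q₀ - p‖^2 : ℝ) : EReal) := by
    refine le_trans (iInf_le _ p) ?_
    rw [hind_eq _ hconstr, add_zero, hgp, ← EReal.coe_mul, ← EReal.coe_add]
  have hΦq₀ : φ q₀ + (((1:ℝ)/2*‖q₀ - x‖^2 : ℝ) : EReal) ≤ ((α⁻¹ * r : ℝ) : EReal) := by
    rw [hφ q₀]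
    have horth' := horth q₀ p hconstr
    have heq : α⁻¹ * r = α⁻¹ * (α * gp + (1:ℝ)/2*‖A q₀ - p‖^2) + (1:ℝ)/2*‖q₀ - x‖^2 := by
      rw [hrdef, horth']
      field_simp
      ring
    rw [heq]
    exact ub_aux hαinv hIub
  constructor
  · -- uniqueness direction
    intro hq
    have hΦq : φ q + (((1:ℝ)/2*‖q - x‖^2 : ℝ) : EReal) ≤ ((α⁻¹ * r : ℝ) : EReal) :=
      le_trans (hq q₀) hΦq₀
    rw [hφ q] at hΦq
    have hIlbq := hIlb q
    set Iq := ⨅ y, ((α : EReal) * g y + (((1:ℝ)/2*‖A q - y‖^2 : ℝ) : EReal) +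
      eindicator {v | B v = 0} (A q - y)) with hIqdef
    have hIq_ne_top : Iq ≠ ⊤ := by
      intro h
      rw [h, EReal.mul_top_of_pos (by exact_mod_cast hαinv : (0:EReal) < (α⁻¹:ℝ)),
        EReal.top_add_of_ne_bot (EReal.coe_ne_bot _)] at hΦq
      exact (EReal.coe_lt_top _).not_ge hΦq
    have hIq_ne_bot : Iq ≠ ⊥ := by
      intro h
      rw [h] at hIlbq
      exact (EReal.coe_ne_bot _) (le_bot_iff.mp hIlbq)
    obtain ⟨s, hs⟩ := ereal_cases hIq_ne_bot hIq_ne_top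
    have hslb : r - α*((1:ℝ)/2*‖q - x‖^2) ≤ s := by
      rw [hs] at hIlbq; exact_mod_cast hIlbq
    have hsub : s ≤ r - α*((1:ℝ)/2*‖q - x‖^2) := by
      rw [hs, ← EReal.coe_mul, ← EReal.coe_add, EReal.coe_le_coe_iff] at hΦq
      have h2 := mul_le_mul_of_nonneg_left hΦq hα.le
      have h3 : α * (α⁻¹*s + (1:ℝ)/2*‖q - x‖^2) = s + α*((1:ℝ)/2*‖q - x‖^2) := by
        field_simp
      have h4 : α * (α⁻¹*r) = r := by field_simp
      linarith [h2, h3.symm.le, h4.le]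
    have hv : α • q - B p = 0 := by
      have hnorm_le : ∀ ε : ℝ, 0 < ε → ‖α • q - B p‖ ≤ 0 + ε := by
        intro ε hε
        set δ := ε / (‖B‖ + 1) with hδdef
        have hBnn : (0:ℝ) ≤ ‖B‖ := norm_nonneg _
        have hδpos : 0 < δ := div_pos hε (by linarith)
        have hlt : Iq < ((s + δ^2/4 : ℝ) : EReal) := by
          rw [hs]
          exact_mod_cast (by nlinarith : s < s + δ^2/4)
        rw [hIqdef] at hlt
        obtain ⟨y, hy⟩ := iInf_lt_iff.mp hlt
        have hcy : B (A q - y) = 0 := by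
          by_contra hcy
          rw [hind_ne _ hcy, EReal.add_top_of_ne_bot] at hy
          · exact (not_top_lt) hy
          · intro hb
            rcases EReal.add_eq_bot_iff.mp hb with h | h
            · exact hmul_ne_bot y h
            · exact EReal.coe_ne_bot _ h
        rw [hind_eq _ hcy, add_zero] at hy
        have hgy_ne_top : g y ≠ ⊤ := by
          intro h
          rw [h, EReal.mul_top_of_pos hαE,
            EReal.top_add_of_ne_bot (EReal.coe_ne_bot _)] at hy
          exact (not_top_lt) hy
        obtain ⟨gy, hgy⟩ := ereal_cases (hgbot y) hgy_ne_top
        rw [hgy] at hy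
        have hyR : α*gy + (1:ℝ)/2*‖A q - y‖^2 < s + δ^2/4 := by exact_mod_cast hy
        have hs2 := hstrong y
        rw [hgy] at hs2
        have hs2R : r + (1:ℝ)/4*‖y - p‖^2 ≤ α*gy + (1:ℝ)/2*‖y - A x‖^2 := by
          exact_mod_cast hs2
        have ho := horth q y hcy
        have hyp2 : ‖y - p‖^2 < δ^2 := by nlinarith [hsub, hyR, hs2R, ho]
        have hyp : ‖y - p‖ < δ := by nlinarith [norm_nonneg (y - p), hδpos]
        have hBy : B y = α • q := by
          rw [map_sub, hAv] at hcy
          exact (sub_eq_zero.mp hcy).symm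
        have hveq : α • q - B p = B (y - p) := by rw [map_sub, hBy]
        calc ‖α • q - B p‖ = ‖B (y - p)‖ := by rw [hveq]
          _ ≤ ‖B‖ * ‖y - p‖ := B.le_opNorm _
          _ ≤ ‖B‖ * δ := mul_le_mul_of_nonneg_left hyp.le (norm_nonneg _)
          _ ≤ (‖B‖ + 1) * δ := mul_le_mul_of_nonneg_right (by linarith) hδpos.le
          _ = ε := by
            have hB1 : ‖B‖ + 1 ≠ 0 := by linarith
            rw [hδdef]
            field_simp
          _ ≤ 0 + ε := by linarith
      have h0 : ‖α • q - B p‖ ≤ 0 := le_of_forall_pos_le_add hnorm_le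
      exact norm_le_zero_iff.mp h0
    have hqeq : α • q = B p := sub_eq_zero.mp hv
    rw [hq₀def, ← hqeq, smul_smul, inv_mul_cancel₀ hαne, one_smul]
  · intro hq
    rw [hq]
    intro u
    exact le_trans hΦq₀ (hΦlb u)
end
end

section
/- Let g : ℝ^m → ℝ ∪ {∞} be a proper convex lower semicontinuous function, let b ∈ ℝ^m, let A : ℝ^n → ℝ^m be a linear map satisfying Aᵀ A = α·Id for some α > 0, let x ∈ ℝ^n, and suppose ž ∈ ℝ^m satisfies ž − b ∈ R(A) (the range of A). Then ž minimizes over z ∈ ℝ^m (with the constraint z − b ∈ R(A)) the function α g(z) + (1/2)‖z − (Ax + b)‖² if and only if ž minimizes over z ∈ ℝ^m (with the same constraint) the function g(z) + (1/2)‖α⁻¹ Aᵀ(z − b) − x‖²; in other words, the minimization defining prox_{αg + ι_{R(A)+b}}(Ax + b) is equivalent, on the affine set R(A) + b, to minimizing g(z) + (1/2)‖α⁻¹Aᵀ(z − b) − x‖². -/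
noncomputable section

lemma scale_iff' (α : ℝ) (hα : 0 < α) (X Y : EReal) (hX : X ≠ ⊥) (hY : Y ≠ ⊥) (r s : ℝ) :
    (α : EReal) * X + ((α * r : ℝ) : EReal) ≤ (α : EReal) * Y + ((α * s : ℝ) : EReal) ↔
      X + (r : EReal) ≤ Y + (s : EReal) := by
  induction X using EReal.rec with
  | bot => exact absurd rfl hX
  | top =>
    induction Y using EReal.rec with
    | bot => exact absurd rfl hY
    | top =>
      simp only [EReal.coe_mul_top_of_pos hα, EReal.top_add_coe]
    | coe y =>
      rw [EReal.coe_mul_top_of_pos hα, EReal.top_add_coe, EReal.top_add_coe,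
        ← EReal.coe_mul, ← EReal.coe_add, ← EReal.coe_add]
      simp only [top_le_iff]
      exact iff_of_false (EReal.coe_ne_top _) (EReal.coe_ne_top _)
  | coe xr =>
    induction Y using EReal.rec with
    | bot => exact absurd rfl hY
    | top =>
      rw [EReal.coe_mul_top_of_pos hα, EReal.top_add_coe, EReal.top_add_coe]
      simp only [le_top]
    | coe y =>
      rw [← EReal.coe_mul, ← EReal.coe_mul, ← EReal.coe_add, ← EReal.coe_add,
        ← EReal.coe_add, ← EReal.coe_add, EReal.coe_le_coe_iff, EReal.coe_le_coe_iff]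
      constructor <;> intro h <;> nlinarith

open scoped RealInnerProductSpace in
lemma norm_eq_aux (n m : ℕ)
    (b : EuclideanSpace ℝ (Fin m))
    (A : EuclideanSpace ℝ (Fin n) →L[ℝ] EuclideanSpace ℝ (Fin m))
    (α : ℝ) (hα : 0 < α)
    (hA : (ContinuousLinearMap.adjoint A).comp A =
      α • ContinuousLinearMap.id ℝ (EuclideanSpace ℝ (Fin n)))
    (x : EuclideanSpace ℝ (Fin n))
    (z : EuclideanSpace ℝ (Fin m)) (hz : z - b ∈ Set.range A) :
    (1 : ℝ) / 2 * ‖z - (A x + b)‖ ^ 2 =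
      α * ((1 : ℝ) / 2 * ‖α⁻¹ • (ContinuousLinearMap.adjoint A) (z - b) - x‖ ^ 2) := by
  obtain ⟨u, hu⟩ := hz
  have hAtA : ∀ v, (ContinuousLinearMap.adjoint A) (A v) = α • v := by
    intro v
    have := congrFun (congrArg DFunLike.coe hA) v
    simpa using this
  have h1 : α⁻¹ • (ContinuousLinearMap.adjoint A) (z - b) = u := by
    rw [← hu, hAtA, smul_smul, inv_mul_cancel₀ hα.ne', one_smul]
  have h2 : z - (A x + b) = A (u - x) := by
    rw [map_sub, hu]; abel
  have h3 : ‖A (u - x)‖ ^ 2 = α * ‖u - x‖ ^ 2 := by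
    have h : (inner ℝ (A (u - x)) (A (u - x)) : ℝ) = α * (inner ℝ (u - x) (u - x) : ℝ) := by
      rw [← ContinuousLinearMap.adjoint_inner_left, hAtA, real_inner_smul_left]
    rwa [real_inner_self_eq_norm_sq, real_inner_self_eq_norm_sq] at h
  rw [h2, h3, h1]; ring

theorem statement11 (n m : ℕ)
    (g : EuclideanSpace ℝ (Fin m) → EReal) (hg : ProperConvexLSC g)
    (b : EuclideanSpace ℝ (Fin m))
    (A : EuclideanSpace ℝ (Fin n) →L[ℝ] EuclideanSpace ℝ (Fin m))
    (α : ℝ) (hα : 0 < α)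
    (hA : (ContinuousLinearMap.adjoint A).comp A =
      α • ContinuousLinearMap.id ℝ (EuclideanSpace ℝ (Fin n)))
    (x : EuclideanSpace ℝ (Fin n))
    (zc : EuclideanSpace ℝ (Fin m)) (hzc : zc - b ∈ Set.range A) :
    (∀ z : EuclideanSpace ℝ (Fin m), z - b ∈ Set.range A →
        (α : EReal) * g zc + (((1 : ℝ) / 2 * ‖zc - (A x + b)‖ ^ 2 : ℝ) : EReal) ≤
          (α : EReal) * g z + (((1 : ℝ) / 2 * ‖z - (A x + b)‖ ^ 2 : ℝ) : EReal)) ↔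
      (∀ z : EuclideanSpace ℝ (Fin m), z - b ∈ Set.range A →
        g zc + (((1 : ℝ) / 2 *
            ‖α⁻¹ • (ContinuousLinearMap.adjoint A) (zc - b) - x‖ ^ 2 : ℝ) : EReal) ≤
          g z + (((1 : ℝ) / 2 *
            ‖α⁻¹ • (ContinuousLinearMap.adjoint A) (z - b) - x‖ ^ 2 : ℝ) : EReal)) := by
  obtain ⟨-, hbot, -, -⟩ := hg
  have key : ∀ z : EuclideanSpace ℝ (Fin m), z - b ∈ Set.range A →
      ((α : EReal) * g zc + (((1 : ℝ) / 2 * ‖zc - (A x + b)‖ ^ 2 : ℝ) : EReal) ≤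
        (α : EReal) * g z + (((1 : ℝ) / 2 * ‖z - (A x + b)‖ ^ 2 : ℝ) : EReal) ↔
      g zc + (((1 : ℝ) / 2 *
          ‖α⁻¹ • (ContinuousLinearMap.adjoint A) (zc - b) - x‖ ^ 2 : ℝ) : EReal) ≤
        g z + (((1 : ℝ) / 2 *
          ‖α⁻¹ • (ContinuousLinearMap.adjoint A) (z - b) - x‖ ^ 2 : ℝ) : EReal)) := by
    intro z hz
    rw [norm_eq_aux n m b A α hα hA x zc hzc, norm_eq_aux n m b A α hα hA x z hz]
    exact scale_iff' α hα (g zc) (g z) (hbot zc) (hbot z) _ _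
  constructor
  · intro h z hz; exact (key z hz).mp (h z hz)
  · intro h z hz; exact (key z hz).mpr (h z hz)
end
end
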